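/- For any infinite cardinal κ, the group of order automorphisms of the poset σℕ^κ (pointwise order) is isomorphic to the symmetric group S_κ of all bijections of κ; moreover every order automorphism of σℕ^κ is of the form a ↦ a ∘ g⁻¹ for a unique bijection g of κ. -/

import Mathlib

open scoped Classical

/-- `σℕ^κ`: functions `κ → ℕ` with all values `≥ 1` and only finitely many values `≠ 1`. -/
def sigmaN (κ : Type*) : Set (κ → ℕ) :=
  {a | (∀ x, 1 ≤ a x) ∧ {x | a x ≠ 1}.Finite}

/-- The poset `σℕ^κ` (with the pointwise order, inherited from `κ → ℕ`). -/
abbrev SN (κ : Type*) := ↥(sigmaN κ)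

/-- The constant function `𝟏`. -/
def oneSN (κ : Type*) : SN κ :=
  ⟨fun _ => 1, fun _ => le_refl 1, by simp⟩

/-- `n_x`: value `n` at `x` and `1` elsewhere (for `n ≥ 1`; `max n 1` guards degenerate `n = 0`). -/
noncomputable def nfS {κ : Type*} (n : ℕ) (x : κ) : SN κ :=
  ⟨fun t => if t = x then max n 1 else 1, by
    refine ⟨fun t => ?_, Set.Finite.subset (Set.finite_singleton x) fun t ht => ?_⟩
    · by_cases h : t = x <;> simp [h]
    · simp only [Set.mem_setOf_eq] at ht
      by_contra hc
      simp only [Set.mem_singleton_iff] at hc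
      exact ht (if_neg hc)⟩

section Aux

variable {κ : Type*}

lemma SN.le_def {a b : SN κ} : a ≤ b ↔ ∀ t, a.1 t ≤ b.1 t := Iff.rfl

lemma nfS_apply_self (n : ℕ) (x : κ) : (nfS n x : SN κ).1 x = max n 1 := if_pos rfl

lemma nfS_apply_self' {n : ℕ} (hn : 1 ≤ n) (x : κ) : (nfS n x : SN κ).1 x = n := by
  rw [nfS_apply_self, Nat.max_eq_left hn]

lemma nfS_apply_ne (n : ℕ) {x t : κ} (h : t ≠ x) : (nfS n x : SN κ).1 t = 1 := if_neg h

lemma nfS_le_iff {n : ℕ} {x : κ} {b : SN κ} : nfS n x ≤ b ↔ max n 1 ≤ b.1 x := by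
  constructor
  · intro h
    have := h x
    rwa [nfS_apply_self] at this
  · intro h t
    by_cases ht : t = x
    · subst ht; rwa [nfS_apply_self]
    · rw [nfS_apply_ne n ht]; exact b.2.1 t

lemma nfS_inj {n : ℕ} (hn : 2 ≤ n) {x y : κ} (h : (nfS n x : SN κ) = nfS n y) : x = y := by
  by_contra hxy
  have h2 := congrArg (fun b : SN κ => b.1 x) h
  rw [nfS_apply_self' (by omega), nfS_apply_ne n hxy] at h2
  omega

/-- A "chain element": every two elements below it are comparable. -/
def IsChainEl (b : SN κ) : Prop := ∀ c d : SN κ, c ≤ b → d ≤ b → c ≤ d ∨ d ≤ c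

lemma isChainEl_nfS (n : ℕ) (x : κ) : IsChainEl (nfS n x : SN κ) := by
  intro c d hc hd
  rcases le_total (c.1 x) (d.1 x) with h | h
  · left
    intro t
    by_cases ht : t = x
    · subst ht; exact h
    · have hct : c.1 t ≤ 1 := by
        have := hc t; rwa [nfS_apply_ne n ht] at this
      exact hct.trans (d.2.1 t)
  · right
    intro t
    by_cases ht : t = x
    · subst ht; exact h
    · have hdt : d.1 t ≤ 1 := by
        have := hd t; rwa [nfS_apply_ne n ht] at this
      exact hdt.trans (c.2.1 t)

lemma chainEl_eq [Nonempty κ] {b : SN κ} (hb : IsChainEl b) :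
    ∃ y, b = nfS (b.1 y) y := by
  by_cases h : ∃ y, b.1 y ≠ 1
  · obtain ⟨y, hy⟩ := h
    have hby : 2 ≤ b.1 y := by have := b.2.1 y; omega
    have hval : ∀ t, t ≠ y → b.1 t = 1 := by
      intro t ht
      by_contra htv
      have hbt : 2 ≤ b.1 t := by have := b.2.1 t; omega
      have hcb : (nfS (b.1 y) y : SN κ) ≤ b := nfS_le_iff.2 (max_le le_rfl (b.2.1 y))
      have hdb : (nfS (b.1 t) t : SN κ) ≤ b := nfS_le_iff.2 (max_le le_rfl (b.2.1 t))
      rcases hb _ _ hcb hdb with hcd | hdc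
      · have h2 : (nfS (b.1 y) y : SN κ).1 y ≤ (nfS (b.1 t) t : SN κ).1 y := hcd y
        rw [nfS_apply_self' (by omega), nfS_apply_ne _ (Ne.symm ht)] at h2
        omega
      · have h2 : (nfS (b.1 t) t : SN κ).1 t ≤ (nfS (b.1 y) y : SN κ).1 t := hdc t
        rw [nfS_apply_self' (by omega), nfS_apply_ne _ ht] at h2
        omega
    refine ⟨y, Subtype.ext (funext fun t => ?_)⟩
    by_cases ht : t = y
    · subst ht
      rw [nfS_apply_self' (by omega)]
    · rw [nfS_apply_ne _ ht, hval t ht]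
  · push_neg at h
    obtain ⟨y⟩ := ‹Nonempty κ›
    refine ⟨y, Subtype.ext (funext fun t => ?_)⟩
    by_cases ht : t = y
    · subst ht
      rw [nfS_apply_self' (by rw [h t]), h t]
    · rw [nfS_apply_ne _ ht, h t]

lemma card_Iic_nfS (n : ℕ) (x : κ) :
    Nat.card (Set.Iic (nfS n x : SN κ)) = max n 1 := by
  have toMem : ∀ c : Set.Iic (nfS n x : SN κ), c.1.1 x ∈ Set.Icc 1 (max n 1) := by
    intro c
    refine Set.mem_Icc.2 ⟨c.1.2.1 x, ?_⟩
    have h3 : c.1.1 x ≤ (nfS n x : SN κ).1 x := c.2 x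
    rwa [nfS_apply_self] at h3
  have invMem : ∀ m : Set.Icc 1 (max n 1), (nfS m.1 x : SN κ) ∈ Set.Iic (nfS n x : SN κ) := by
    intro m
    refine Set.mem_Iic.2 (nfS_le_iff.2 ?_)
    rw [nfS_apply_self]
    exact max_le (Set.mem_Icc.1 m.2).2 (le_max_right n 1)
  have e : Set.Iic (nfS n x : SN κ) ≃ Set.Icc 1 (max n 1) :=
    { toFun := fun c => ⟨c.1.1 x, toMem c⟩
      invFun := fun m => ⟨nfS m.1 x, invMem m⟩
      left_inv := by
        rintro ⟨c, hcle⟩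
        refine Subtype.ext (Subtype.ext (funext fun t => ?_))
        by_cases ht : t = x
        · subst ht
          exact nfS_apply_self' (c.2.1 t) t
        · have h1 : c.1 t ≤ 1 := by
            have h3 : c.1 t ≤ (nfS n x : SN κ).1 t := hcle t
            rwa [nfS_apply_ne n ht] at h3
          have h2 := c.2.1 t
          rw [nfS_apply_ne _ ht]
          show 1 = c.1 t
          omega
      right_inv := by
        rintro ⟨m, hm⟩
        exact Subtype.ext (nfS_apply_self' (Set.mem_Icc.1 hm).1 x) }
  rw [Nat.card_congr e, Nat.card_coe_set_eq, ← Finset.coe_Icc, Set.ncard_coe_finset,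
    Nat.card_Icc]
  omega

lemma orderIso_isChainEl (α : SN κ ≃o SN κ) {b : SN κ} (hb : IsChainEl b) :
    IsChainEl (α b) := by
  intro c d hc hd
  have hc' : α.symm c ≤ b := by
    rw [← α.symm_apply_apply b]; exact α.symm.monotone hc
  have hd' : α.symm d ≤ b := by
    rw [← α.symm_apply_apply b]; exact α.symm.monotone hd
  rcases hb _ _ hc' hd' with h | h
  · left
    have := α.monotone h
    simpa using this
  · right
    have := α.monotone h
    simpa using this

lemma card_Iic_map (α : SN κ ≃o SN κ) (b : SN κ) :
    Nat.card (Set.Iic (α b)) = Nat.card (Set.Iic b) := by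
  refine (Nat.card_congr ?_).symm
  exact Equiv.subtypeEquiv α.toEquiv (fun c => by
    simp only [Set.mem_Iic, RelIso.coe_fn_toEquiv]
    exact α.le_iff_le.symm)

lemma SN.step [Nonempty κ] (β : SN κ ≃o SN κ) {n : ℕ} (hn : 2 ≤ n) (x : κ) :
    ∃ y, β (nfS n x) = nfS n y := by
  have hchain : IsChainEl (β (nfS n x)) := orderIso_isChainEl β (isChainEl_nfS n x)
  obtain ⟨y, hy⟩ := chainEl_eq hchain
  have hcard : Nat.card (Set.Iic (β (nfS n x))) = n := by
    rw [card_Iic_map, card_Iic_nfS]; omega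
  have hval : (β (nfS n x)).1 y = n := by
    rw [hy, card_Iic_nfS] at hcard
    have := (β (nfS n x)).2.1 y
    omega
  exact ⟨y, by rw [hy, hval]⟩

end Aux


section Main

variable {κ : Type*}

lemma comp_mem (a : SN κ) (e : κ ≃ κ) : (a.1 ∘ e) ∈ sigmaN κ := by
  refine ⟨fun t => a.2.1 _, ?_⟩
  refine Set.Finite.subset (a.2.2.image e.symm) fun t ht => ?_
  exact ⟨e t, ht, e.symm_apply_apply t⟩

/-- The map `Perm κ → (SN κ ≃o SN κ)`. -/
noncomputable def PhiSN (g : Equiv.Perm κ) : SN κ ≃o SN κ where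
  toFun a := ⟨a.1 ∘ g.symm, comp_mem a g.symm⟩
  invFun a := ⟨a.1 ∘ g, comp_mem a g⟩
  left_inv a := Subtype.ext (funext fun t => by simp)
  right_inv a := Subtype.ext (funext fun t => by simp)
  map_rel_iff' := by
    intro a b
    constructor
    · intro h t
      have h2 : (a.1 ∘ ⇑g.symm) (g t) ≤ (b.1 ∘ ⇑g.symm) (g t) := h (g t)
      simpa using h2
    · intro h t
      exact h (g.symm t)

lemma exists_perm [Infinite κ] (α : SN κ ≃o SN κ) :
    ∃ g : Equiv.Perm κ, ∀ a : SN κ, ((α a : SN κ) : κ → ℕ) = (a : κ → ℕ) ∘ g.symm := by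
  have hg0 : ∀ (β : SN κ ≃o SN κ) (x : κ), ∃ y, β (nfS 2 x) = nfS 2 y :=
    fun β x => SN.step β le_rfl x
  set f : (SN κ ≃o SN κ) → κ → κ := fun β x => Classical.choose (hg0 β x) with hf
  have hfspec : ∀ β x, β (nfS 2 x) = nfS 2 (f β x) := fun β x => Classical.choose_spec (hg0 β x)
  have hcancel : ∀ (β : SN κ ≃o SN κ) (x : κ), f β.symm (f β x) = x := by
    intro β x
    have h1 : β (nfS 2 x) = nfS 2 (f β x) := hfspec β x
    have h2 : β.symm (nfS 2 (f β x)) = nfS 2 (f β.symm (f β x)) := hfspec β.symm _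
    rw [← h1, β.symm_apply_apply] at h2
    exact (nfS_inj le_rfl h2).symm
  set g : Equiv.Perm κ := ⟨f α, f α.symm, hcancel α, by
    intro x
    have h3 := hcancel α.symm x
    rwa [OrderIso.symm_symm] at h3⟩ with hg
  have key : ∀ (n : ℕ), 2 ≤ n → ∀ x, α (nfS n x) = nfS n (g x) := by
    intro n hn x
    obtain ⟨y, hy⟩ := SN.step α hn x
    have hle : (nfS 2 x : SN κ) ≤ nfS n x := nfS_le_iff.2 (by rw [nfS_apply_self]; omega)
    have hle2 : (nfS 2 (g x) : SN κ) ≤ nfS n y := by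
      have := α.monotone hle
      rwa [hfspec α x, hy] at this
    have h2 : (2 : ℕ) ≤ (nfS n y : SN κ).1 (g x) := by
      have h4 := nfS_le_iff.1 hle2
      simpa using h4
    have hxy : g x = y := by
      by_contra hc
      rw [nfS_apply_ne n hc] at h2; omega
    rw [hy, hxy]
  refine ⟨g, fun a => funext fun t => ?_⟩
  have hpoint : ∀ x, (α a).1 (g x) = a.1 x := by
    intro x
    have hiff : ∀ n, 2 ≤ n → (n ≤ a.1 x ↔ n ≤ (α a).1 (g x)) := by
      intro n hn
      have e1 : (nfS n x : SN κ) ≤ a ↔ n ≤ a.1 x := by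
        rw [nfS_le_iff, Nat.max_eq_left (by omega)]
      have e2 : (nfS n (g x) : SN κ) ≤ α a ↔ n ≤ (α a).1 (g x) := by
        rw [nfS_le_iff, Nat.max_eq_left (by omega)]
      rw [← e1, ← e2, ← key n hn x]
      exact α.le_iff_le.symm
    have h1 := hiff (a.1 x + 1) (by have := a.2.1 x; omega)
    have h2 := hiff ((α a).1 (g x) + 1) (by have := (α a).2.1 (g x); omega)
    omega
  have hgt : g (g.symm t) = t := g.apply_symm_apply t
  calc (α a).1 t = (α a).1 (g (g.symm t)) := by rw [hgt]
    _ = a.1 (g.symm t) := hpoint _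

lemma perm_unique {g g' : Equiv.Perm κ}
    (h : ∀ a : SN κ, (a : κ → ℕ) ∘ ⇑g.symm = (a : κ → ℕ) ∘ ⇑g'.symm) : g = g' := by
  ext x
  have h1 := congrFun (h (nfS 2 x)) (g x)
  simp only [Function.comp_apply, g.symm_apply_apply] at h1
  rw [nfS_apply_self' one_le_two] at h1
  by_contra hc
  have hne : g'.symm (g x) ≠ x := fun he => hc (by rw [← g'.apply_symm_apply (g x), he])
  rw [nfS_apply_ne _ hne] at h1
  omega

end Main

/-- The group of order automorphisms of `σℕ^κ` is isomorphic to `S_κ`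
(the bijection `Φ` is multiplicative, where `g.trans h` applies `g` first,
matching left-to-right composition of order isomorphisms), and every order
automorphism has the form `a ↦ a ∘ g⁻¹` for a unique bijection `g` of `κ`. -/
theorem stmt11 {κ : Type*} [Infinite κ] :
    (∃ Φ : Equiv.Perm κ → (SN κ ≃o SN κ),
      Function.Bijective Φ ∧ ∀ g h : Equiv.Perm κ, Φ (g.trans h) = (Φ g).trans (Φ h)) ∧
    (∀ α : SN κ ≃o SN κ, ∃! g : Equiv.Perm κ,
      ∀ a : SN κ, ((α a : SN κ) : κ → ℕ) = (a : κ → ℕ) ∘ g.symm) := by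
  have key : ∀ α : SN κ ≃o SN κ, ∃! g : Equiv.Perm κ,
      ∀ a : SN κ, ((α a : SN κ) : κ → ℕ) = (a : κ → ℕ) ∘ g.symm := by
    intro α
    obtain ⟨g, hg⟩ := exists_perm α
    exact ⟨g, hg, fun g' hg' => perm_unique (fun a => (hg' a).symm.trans (hg a))⟩
  refine ⟨⟨PhiSN, ⟨?_, ?_⟩, ?_⟩, key⟩
  · intro g₁ g₂ hΦ
    refine perm_unique (fun a => ?_)
    have := congrArg (fun β : SN κ ≃o SN κ => (β a : SN κ).1) hΦ
    exact this
  · intro α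
    obtain ⟨g, hg⟩ := exists_perm α
    exact ⟨g, OrderIso.ext (funext fun a => Subtype.ext (hg a).symm)⟩
  · intro g h
    refine OrderIso.ext (funext fun a => Subtype.ext (funext fun t => rfl))
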